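/- Let A be a |U|×|X| column-stochastic matrix with no zero rows and left null space of dimension n = |U| − rank(A). If n = |U| − 1 and (I Υ̃) is the row-reduced echelon basis matrix of the left null space (Υ̃ an n×1 column), then each entry of Υ̃ is negative, and for each i the L1-normalization of row i of (I Υ̃) is an (a_min, 0)-double polarized vector in the left null space of A. -/

import Mathlib

open Finset

/-- Minimum row sum of the matrix `A`. -/
noncomputable def Amin {U X : ℕ} [NeZero U] (A : Matrix (Fin U) (Fin X) ℝ) : ℝ :=
  Finset.univ.inf' Finset.univ_nonempty (fun i => ∑ j, A i j)

/-- The constant `a_min = A_min / (|U|(|X| + A_min))`. -/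
noncomputable def amin {U X : ℕ} [NeZero U] (A : Matrix (Fin U) (Fin X) ℝ) : ℝ :=
  Amin A / (U * (X + Amin A))

theorem stmt_15 {U X : ℕ} [NeZero U] [NeZero X] (hU2 : 2 ≤ U)
    (A : Matrix (Fin U) (Fin X) ℝ)
    (hA0 : ∀ i j, 0 ≤ A i j) (hAcol : ∀ j, ∑ i, A i j = 1)
    (hArow : ∀ i, ∃ j, A i j ≠ 0)
    -- the left null space has dimension `n = |U| - 1`, i.e. `rank A = 1`
    (hrank : A.rank = 1)
    (Υt : Fin (U - 1) → ℝ)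
    (row : Fin (U - 1) → Fin U → ℝ)
    (hrowdef : ∀ i j, row i j =
      if (j : ℕ) = (i : ℕ) then 1 else if (j : ℕ) = U - 1 then Υt i else 0)
    (hnull : ∀ i j, ∑ k, row i k * A k j = 0) :
    ∀ i : Fin (U - 1), Υt i < 0 ∧
      (∀ j, ∑ k, (row i k / (∑ l, |row i l|)) * A k j = 0) ∧
      (∑ k, |row i k / (∑ l, |row i l|)| = 1) ∧
      amin A ≤ row i ⟨(i : ℕ), by have := i.isLt; omega⟩ / (∑ l, |row i l|) ∧
      row i ⟨U - 1, by omega⟩ / (∑ l, |row i l|) ≤ -(amin A) ∧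
      (∀ j : Fin U, (j : ℕ) ≠ (i : ℕ) → (j : ℕ) ≠ U - 1 →
        row i j / (∑ l, |row i l|) = 0) := by
  intro i
  have hi : (i : ℕ) < U - 1 := i.isLt
  have hU1 : 1 ≤ U := le_trans (by norm_num) hU2
  set p : Fin U := ⟨(i : ℕ), by omega⟩ with hp
  set q : Fin U := ⟨U - 1, by omega⟩ with hq
  have hpval : (p : ℕ) = (i : ℕ) := rfl
  have hqval : (q : ℕ) = U - 1 := rfl
  have hpq : p ≠ q := by
    intro hh
    have := congrArg Fin.val hh
    omega
  -- row sums
  set R : Fin U → ℝ := fun k => ∑ j, A k j with hR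
  have hRpos : ∀ k, 0 < R k := by
    intro k
    obtain ⟨j, hj⟩ := hArow k
    have h1 : 0 < A k j := lt_of_le_of_ne (hA0 k j) (Ne.symm hj)
    have h2 : A k j ≤ R k :=
      Finset.single_le_sum (fun l _ => hA0 k l) (Finset.mem_univ j)
    linarith
  have htot : ∑ k, R k = (X : ℝ) := by
    rw [hR]
    beta_reduce
    rw [Finset.sum_comm (f := fun k j => A k j)]
    simp [hAcol]
  -- key two-term sum formula
  have hrow' : ∀ (g : Fin U → ℝ),
      ∑ k, row i k * g k = g p + Υt i * g q := by
    intro g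
    have hpt : ∀ k : Fin U, row i k * g k =
        (if p = k then g p else 0) + (if q = k then Υt i * g q else 0) := by
      intro k
      rw [hrowdef]
      by_cases h1 : (k : ℕ) = (i : ℕ)
      · have hkp : p = k := Fin.ext (by omega)
        have hqk : ¬ q = k := by intro hh; have := congrArg Fin.val hh; omega
        rw [if_pos h1, if_pos hkp, if_neg hqk, ← hkp]
        simp
      · by_cases h2 : (k : ℕ) = U - 1
        · have hqk : q = k := Fin.ext (by omega)
          have hpk : ¬ p = k := by intro hh; have := congrArg Fin.val hh; omega
          rw [if_neg h1, if_pos h2, if_neg hpk, if_pos hqk, ← hqk]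
          simp
        · have hpk : ¬ p = k := by intro hh; have := congrArg Fin.val hh; omega
          have hqk : ¬ q = k := by intro hh; have := congrArg Fin.val hh; omega
          rw [if_neg h1, if_neg h2, if_neg hpk, if_neg hqk]
          simp
    rw [Finset.sum_congr rfl fun k _ => hpt k, Finset.sum_add_distrib,
      Finset.sum_ite_eq, Finset.sum_ite_eq]
    simp
  -- value of Υt i
  have hkey : R p + Υt i * R q = 0 := by
    have := hrow' R
    rw [← this, hR]
    beta_reduce
    rw [Finset.sum_congr rfl fun k _ => (Finset.mul_sum (f := fun j => A k j) ..)]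
    rw [Finset.sum_comm]
    simp [hnull i]
  have hYneg : Υt i < 0 := by
    have hq0 := hRpos q
    have hp0 := hRpos p
    nlinarith
  -- L1 norm
  have habs : ∑ l, |row i l| = 1 - Υt i := by
    have hpt : ∀ k : Fin U, |row i k| =
        (if p = k then 1 else 0) + (if q = k then -Υt i else 0) := by
      intro k
      rw [hrowdef]
      by_cases h1 : (k : ℕ) = (i : ℕ)
      · have hkp : p = k := Fin.ext (by omega)
        have hqk : ¬ q = k := by intro hh; have := congrArg Fin.val hh; omega
        rw [if_pos h1, if_pos hkp, if_neg hqk]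
        simp
      · by_cases h2 : (k : ℕ) = U - 1
        · have hqk : q = k := Fin.ext (by omega)
          have hpk : ¬ p = k := by intro hh; have := congrArg Fin.val hh; omega
          rw [if_neg h1, if_pos h2, if_neg hpk, if_pos hqk]
          simp [abs_of_neg hYneg]
        · have hpk : ¬ p = k := by intro hh; have := congrArg Fin.val hh; omega
          have hqk : ¬ q = k := by intro hh; have := congrArg Fin.val hh; omega
          rw [if_neg h1, if_neg h2, if_neg hpk, if_neg hqk]
          simp
    rw [Finset.sum_congr rfl fun k _ => hpt k, Finset.sum_add_distrib,
      Finset.sum_ite_eq, Finset.sum_ite_eq]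
    simp
    ring
  set S : ℝ := ∑ l, |row i l| with hS
  have hSpos : 0 < S := by rw [habs]; linarith
  -- Amin facts
  have hAminle : ∀ k, Amin A ≤ R k := fun k =>
    Finset.inf'_le _ (Finset.mem_univ k)
  have hAminpos : 0 < Amin A := by
    rw [Amin, Finset.lt_inf'_iff]
    intro k _
    exact hRpos k
  have hpair : R p + R q ≤ (X : ℝ) := by
    have hsub : ({p, q} : Finset (Fin U)) ⊆ Finset.univ := Finset.subset_univ _
    have := Finset.sum_le_sum_of_subset_of_nonneg hsub
      (fun k _ _ => le_of_lt (hRpos k))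
    rw [Finset.sum_pair hpq, htot] at this
    exact this
  have hXpos : (0 : ℝ) < X := by
    have : (1 : ℕ) ≤ X := Nat.one_le_iff_ne_zero.mpr (NeZero.ne X)
    exact_mod_cast this
  have hdenpos : (0 : ℝ) < (U : ℝ) * ((X : ℝ) + Amin A) := by
    have hU0 : (0 : ℝ) < U := by exact_mod_cast Nat.lt_of_lt_of_le (by norm_num) hU2
    positivity
  have hdenle : R p + R q ≤ (U : ℝ) * ((X : ℝ) + Amin A) := by
    have hU2' : (2 : ℝ) ≤ U := by exact_mod_cast hU2
    nlinarith [hAminpos, hXpos, hpair]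
  -- values of the two entries of the row
  have hrp : row i p = 1 := by
    rw [hrowdef, if_pos hpval]
  have hrq : row i q = Υt i := by
    rw [hrowdef, if_neg (by omega : ¬ ((q : ℕ) = (i : ℕ))), if_pos hqval]
  refine ⟨hYneg, ?_, ?_, ?_, ?_, ?_⟩
  · intro j
    have : ∀ k, row i k / S * A k j = row i k * A k j / S := fun k => by ring
    rw [Finset.sum_congr rfl fun k _ => this k, ← Finset.sum_div, hnull i j, zero_div]
  · have : ∀ k, |row i k / S| = |row i k| / S := fun k => by
      rw [abs_div, abs_of_pos hSpos]
    rw [Finset.sum_congr rfl fun k _ => this k, ← Finset.sum_div, ← hS,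
      div_self (ne_of_gt hSpos)]
  · show amin A ≤ row i p / S
    rw [hrp, amin]
    rw [habs]
    have h1 : 1 - Υt i = (R q + R p) / R q := by
      have := hRpos q
      field_simp
      linarith [hkey]
    rw [h1, one_div_div]
    apply div_le_div₀ (le_of_lt (hRpos q)) (hAminle q) (by linarith [hRpos p, hRpos q])
    linarith [hdenle]
  · show row i q / S ≤ -(amin A)
    rw [hrq, amin, habs]
    have h1 : Υt i / (1 - Υt i) = -(R p / (R q + R p)) := by
      have hq0 := hRpos q
      have hp0 := hRpos p
      rw [div_eq_iff (by linarith)]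
      field_simp
      nlinarith [hkey]
    rw [h1, neg_le_neg_iff]
    apply div_le_div₀ (le_of_lt (hRpos p)) (hAminle p) (by linarith [hRpos p, hRpos q])
    linarith [hdenle]
  · intro j h1 h2
    rw [hrowdef]
    simp [h1, h2]
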